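/- If Δ is a connected graph on vertex set [n] whose labeling is an interval order (i.e., for all a < b < c, if {a,c} is an edge then {a,b} is an edge), then the lexicographic order on the edges of Δ is a shelling order of Δ viewed as a 1-dimensional simplicial complex. -/

import Mathlib

open Finset

/-- A simplicial complex on vertex set `ℕ`, given as the finite family of all of its
faces, closed under taking subsets. -/
def IsComplex (Δ : Finset (Finset ℕ)) : Prop :=
  ∀ F ∈ Δ, ∀ G ⊆ F, G ∈ Δ

/-- `F` is a facet (maximal face) of `Δ`. -/
def IsFacet (Δ : Finset (Finset ℕ)) (F : Finset ℕ) : Prop :=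
  F ∈ Δ ∧ ∀ G ∈ Δ, F ⊆ G → F = G

/-- The finset of facets of `Δ`. -/
def facets (Δ : Finset (Finset ℕ)) : Finset (Finset ℕ) :=
  Δ.filter fun F => ∀ G ∈ Δ, F ⊆ G → F = G

/-- `Δ` is pure of dimension `d`: every facet has `d + 1` vertices. -/
def IsPure (d : ℕ) (Δ : Finset (Finset ℕ)) : Prop :=
  ∀ F, IsFacet Δ F → F.card = d + 1

/-- Dual graph of a pure `d`-dimensional complex: nodes are facets, two facets are
adjacent iff they share a face with `d` elements (a codimension-one face). -/
def dualGraph (d : ℕ) (Δ : Finset (Finset ℕ)) : SimpleGraph {F // F ∈ facets Δ} :=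
  SimpleGraph.fromRel fun F G => ((F : Finset ℕ) ∩ (G : Finset ℕ)).card = d

/-- `Δ` is strongly connected: its dual graph is connected. -/
def StronglyConnected (d : ℕ) (Δ : Finset (Finset ℕ)) : Prop :=
  (dualGraph d Δ).Connected

/-- The labeling of the vertices by `ℕ` is a unit interval order: whenever
`F = {v₀ < v₁ < ⋯ < v_d}` is a facet, every `(d+1)`-element subset of the integer
interval `{v₀, v₀+1, …, v_d}` is a facet. -/
def UnitIntervalOrder (d : ℕ) (Δ : Finset (Finset ℕ)) : Prop :=
  ∀ F, IsFacet Δ F → ∀ hF : F.Nonempty,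
    ∀ S ⊆ Finset.Icc (F.min' hF) (F.max' hF), S.card = d + 1 → IsFacet Δ S

/-- The increasing list of the vertices of a face. -/
def sortedList (F : Finset ℕ) : List ℕ := F.sort (· ≤ ·)

/-- Lexicographic order on faces, comparing the increasing lists of vertices. -/
def faceLexLt (F G : Finset ℕ) : Prop :=
  List.Lex (· < ·) (sortedList F) (sortedList G)

/-- `L` lists exactly the facets of `Δ`, in lexicographic order. -/
def LexFacetList (Δ : Finset (Finset ℕ)) (L : List (Finset ℕ)) : Prop :=
  L.Nodup ∧ L.toFinset = facets Δ ∧ L.Pairwise faceLexLt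

/-- `L` is a shelling order of the pure `d`-dimensional complex `Δ`: it lists the
facets of `Δ` so that for each `k`, the intersection of `⟨L[k+1]⟩` with
`⟨L[0], …, L[k]⟩` is pure of dimension `d - 1`, i.e. it is nonempty and each of
its faces is contained in a common `d`-element face of `L[k+1]` and some earlier
facet. -/
def IsShellingOrder (d : ℕ) (Δ : Finset (Finset ℕ)) (L : List (Finset ℕ)) : Prop :=
  L.Nodup ∧ L.toFinset = facets Δ ∧
  ∀ (k : ℕ) (hk : k + 1 < L.length),
    (∃ τ ⊆ L.get ⟨k + 1, hk⟩, τ.card = d ∧ ∃ G ∈ L.take (k + 1), τ ⊆ G) ∧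
    (∀ σ ⊆ L.get ⟨k + 1, hk⟩, (∃ G ∈ L.take (k + 1), σ ⊆ G) →
      ∃ τ, σ ⊆ τ ∧ τ ⊆ L.get ⟨k + 1, hk⟩ ∧ τ.card = d ∧ ∃ G ∈ L.take (k + 1), τ ⊆ G)

/-- `Δ` is shellable (as a pure `d`-dimensional complex). -/
def Shellable (d : ℕ) (Δ : Finset (Finset ℕ)) : Prop :=
  ∃ L, IsShellingOrder d Δ L

/-- The link of the vertex `v` in `Δ`. -/
def linkC (Δ : Finset (Finset ℕ)) (v : ℕ) : Finset (Finset ℕ) :=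
  Δ.filter fun E => v ∉ E ∧ insert v E ∈ Δ

/-- The deletion of the vertex `v` from `Δ`. -/
def delC (Δ : Finset (Finset ℕ)) (v : ℕ) : Finset (Finset ℕ) :=
  Δ.filter fun E => v ∉ E

/-- Vertex decomposability: `Δ` is a simplex (possibly the void/empty simplex `{∅}`),
or it has a shedding vertex `v` whose link and deletion are vertex decomposable and
such that every facet of the deletion is a facet of `Δ`. -/
inductive VertexDecomposable : Finset (Finset ℕ) → Prop
  | simplex (V : Finset ℕ) : VertexDecomposable V.powerset
  | shed (Δ : Finset (Finset ℕ)) (v : ℕ) :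
      VertexDecomposable (linkC Δ v) → VertexDecomposable (delC Δ v) →
      (∀ F, IsFacet (delC Δ v) F → IsFacet Δ F) → VertexDecomposable Δ

section Aux

lemma mem_facets_iff' {Δ : Finset (Finset ℕ)} {F : Finset ℕ} :
    F ∈ facets Δ ↔ IsFacet Δ F := Finset.mem_filter

lemma exists_facet_superset' {Δ : Finset (Finset ℕ)} {F : Finset ℕ} (hF : F ∈ Δ) :
    ∃ G, IsFacet Δ G ∧ F ⊆ G := by
  classical
  have hne : (Δ.filter (F ⊆ ·)).Nonempty := ⟨F, by simp [hF]⟩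
  obtain ⟨G, hG, hmax⟩ := Finset.exists_max_image (Δ.filter (F ⊆ ·)) Finset.card hne
  simp only [Finset.mem_filter] at hG
  refine ⟨G, ⟨hG.1, fun H hH hGH => Finset.eq_of_subset_of_card_le hGH ?_⟩, hG.2⟩
  exact hmax H (by simp [hH, hG.2.trans hGH])

lemma facet_of_card_two' {Δ : Finset (Finset ℕ)} (hP : IsPure 1 Δ)
    {F : Finset ℕ} (hF : F ∈ Δ) (h2 : F.card = 2) : IsFacet Δ F := by
  refine ⟨hF, fun G hG hFG => ?_⟩
  obtain ⟨K, hK, hGK⟩ := exists_facet_superset' hG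
  have hFK : F = K := Finset.eq_of_subset_of_card_le (hFG.trans hGK) (by rw [hP K hK, h2])
  exact Finset.Subset.antisymm hFG (hFK ▸ hGK)

lemma facet_pair' {Δ : Finset (Finset ℕ)} (hP : IsPure 1 Δ) {F : Finset ℕ}
    (hF : IsFacet Δ F) : ∃ a b : ℕ, a < b ∧ F = {a, b} := by
  have h2 := hP F hF
  rw [Finset.card_eq_two] at h2
  obtain ⟨a, b, hab, rfl⟩ := h2
  rcases lt_or_gt_of_ne hab with h | h
  · exact ⟨a, b, h, rfl⟩
  · exact ⟨b, a, h, Finset.pair_comm a b⟩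

lemma sortedList_pair' {a b : ℕ} (h : a < b) :
    sortedList ({a, b} : Finset ℕ) = [a, b] := by
  apply List.Perm.eq_of_pairwise' (l₂ := [a, b]) (Finset.pairwise_sort _ _) ?_
    (List.perm_of_nodup_nodup_toFinset_eq (Finset.sort_nodup _ _) (by simp [h.ne])
      (by rw [Finset.sort_toFinset]; simp))
  simp [h.le]

lemma faceLexLt_asymm' {F G : Finset ℕ} (h : faceLexLt F G) : ¬ faceLexLt G F := by
  have : Std.Asymm (List.Lex (α := ℕ) (· < ·)) := List.Lex.asymm _
  unfold faceLexLt at *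
  exact asymm h

lemma faceLexLt_irrefl' (F : Finset ℕ) : ¬ faceLexLt F F := fun h => faceLexLt_asymm' h h

lemma crossing' {Δ : Finset (Finset ℕ)} (a : ℕ) :
    ∀ {x y : {F // F ∈ facets Δ}}, (dualGraph 1 Δ).Walk x y →
      (∀ v ∈ (x : Finset ℕ), a ≤ v) → (∃ v ∈ (y : Finset ℕ), v < a) →
      ∃ g : Finset ℕ, g ∈ facets Δ ∧ ∃ u ∈ g, ∃ w ∈ g, u < a ∧ a ≤ w := by
  intro x y p
  induction p with
  | nil =>
    intro hx hy
    obtain ⟨v, hv, hva⟩ := hy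
    exact absurd (hx v hv) (not_le.2 hva)
  | @cons x z y h p ih =>
    intro hx hy
    simp only [dualGraph, SimpleGraph.fromRel_adj] at h
    obtain ⟨hne, hcard⟩ := h
    have hint : ((x : Finset ℕ) ∩ (z : Finset ℕ)).Nonempty := by
      rcases hcard with h1 | h1
      · exact Finset.card_pos.mp (h1 ▸ one_pos)
      · rw [Finset.inter_comm]; exact Finset.card_pos.mp (h1 ▸ one_pos)
    obtain ⟨s, hs⟩ := hint
    rw [Finset.mem_inter] at hs
    by_cases hz : ∀ v ∈ (z : Finset ℕ), a ≤ v
    · exact ih hz hy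
    · push_neg at hz
      obtain ⟨v, hv, hva⟩ := hz
      exact ⟨z, z.2, v, hv, s, hs.2, hva, hx s hs.1⟩

lemma exists_earlier_neighbor' {Δ : Finset (Finset ℕ)}
    (hP : IsPure 1 Δ) (hconn : StronglyConnected 1 Δ)
    (hInt : ∀ a b c : ℕ, a < b → b < c → ({a, c} : Finset ℕ) ∈ Δ →
      ({a, b} : Finset ℕ) ∈ Δ)
    {e f : Finset ℕ} (he : IsFacet Δ e) (hf : IsFacet Δ f) (hlt : faceLexLt f e) :
    ∃ g, IsFacet Δ g ∧ faceLexLt g e ∧ (g ∩ e).Nonempty := by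
  obtain ⟨a, b, hab, rfl⟩ := facet_pair' hP he
  obtain ⟨c, d, hcd, rfl⟩ := facet_pair' hP hf
  unfold faceLexLt at hlt
  rw [sortedList_pair' hab, sortedList_pair' hcd] at hlt
  have hca : c < a ∨ c = a := by
    cases hlt with
    | rel h => exact Or.inl h
    | cons h => exact Or.inr rfl
  rcases hca with hca | rfl
  · by_cases hb : a + 1 < b
    · -- use {a, a+1}
      have hg : ({a, a + 1} : Finset ℕ) ∈ Δ := hInt a (a + 1) b (by omega) hb he.1
      refine ⟨{a, a + 1}, facet_of_card_two' hP hg (Finset.card_pair (by omega)), ?_,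
        ⟨a, by simp⟩⟩
      unfold faceLexLt
      rw [sortedList_pair' (by omega : a < a + 1), sortedList_pair' hab]
      exact List.Lex.cons (List.Lex.rel hb)
    · have hb' : b = a + 1 := by omega
      subst hb'
      obtain ⟨p⟩ := hconn.preconnected ⟨{a, a + 1}, mem_facets_iff'.mpr he⟩
        ⟨{c, d}, mem_facets_iff'.mpr hf⟩
      obtain ⟨g, hgfac, u, hu, w, hw, hua, haw⟩ := crossing' a p
        (by intro v hv; simp only [Finset.mem_insert, Finset.mem_singleton] at hv; omega)
        ⟨c, by simp, hca⟩
      have hgf : IsFacet Δ g := mem_facets_iff'.mp hgfac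
      have hguw : ({u, w} : Finset ℕ) = g := by
        apply Finset.eq_of_subset_of_card_le
        · intro x hx
          simp only [Finset.mem_insert, Finset.mem_singleton] at hx
          rcases hx with rfl | rfl
          · exact hu
          · exact hw
        · rw [hP g hgf, Finset.card_pair (by omega : u ≠ w)]
      rcases eq_or_lt_of_le haw with rfl | haw'
      · -- w = a, g = {u, a}
        refine ⟨g, hgf, ?_, ⟨a, Finset.mem_inter.mpr ⟨hw, by simp⟩⟩⟩
        unfold faceLexLt
        rw [← hguw, sortedList_pair' hua, sortedList_pair' (by omega : a < a + 1)]
        exact List.Lex.rel hua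
      · -- w > a, {u, a} ∈ Δ
        have hua' : ({u, a} : Finset ℕ) ∈ Δ := hInt u a w hua haw' (by rw [hguw]; exact hgf.1)
        refine ⟨{u, a}, facet_of_card_two' hP hua' (Finset.card_pair hua.ne), ?_,
          ⟨a, by simp⟩⟩
        unfold faceLexLt
        rw [sortedList_pair' hua, sortedList_pair' (by omega : a < a + 1)]
        exact List.Lex.rel hua
  · -- c = a : f shares its head with e
    refine ⟨{c, d}, hf, ?_, ⟨c, by simp⟩⟩
    unfold faceLexLt
    rw [sortedList_pair' hcd, sortedList_pair' hab]
    exact hlt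

end Aux

theorem stmt1 (n : ℕ) (Δ : Finset (Finset ℕ))
    (hC : IsComplex Δ) (hP : IsPure 1 Δ) (hconn : StronglyConnected 1 Δ)
    (hV : Δ.sup id ⊆ Finset.Icc 1 n)
    (hInt : ∀ a b c : ℕ, a < b → b < c → ({a, c} : Finset ℕ) ∈ Δ →
      ({a, b} : Finset ℕ) ∈ Δ)
    (L : List (Finset ℕ)) (hL : LexFacetList Δ L) :
    IsShellingOrder 1 Δ L := by 
  obtain ⟨hnd, htf, hsort⟩ := hL
  refine ⟨hnd, htf, fun k hk => ?_⟩
  simp only [List.get_eq_getElem]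
  set e := L[k + 1] with he_def
  have heL : e ∈ L := List.getElem_mem hk
  have hefac : IsFacet Δ e := mem_facets_iff'.mp (htf ▸ List.mem_toFinset.mpr heL)
  have h0 : 0 < L.length := by omega
  have hfe : faceLexLt L[0] e := by
    have := hsort.rel_get_of_lt (a := ⟨0, h0⟩) (b := ⟨k + 1, hk⟩) (by simp [Fin.lt_def])
    simpa using this
  have hffac : IsFacet Δ L[0] :=
    mem_facets_iff'.mp (htf ▸ List.mem_toFinset.mpr (List.getElem_mem h0))
  have htake : ∀ g : Finset ℕ, g ∈ L.take (k + 1) ↔ (IsFacet Δ g ∧ faceLexLt g e) := by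
    intro g
    constructor
    · intro hg
      have hgL : g ∈ L := List.mem_of_mem_take hg
      obtain ⟨i, hi, hgi⟩ := List.getElem_of_mem hg
      have hi' : i < k + 1 := by
        have := List.length_take_le (k + 1) L
        omega
      have hiL : i < L.length := by omega
      rw [List.getElem_take] at hgi
      refine ⟨mem_facets_iff'.mp (htf ▸ List.mem_toFinset.mpr hgL), ?_⟩
      have := hsort.rel_get_of_lt (a := ⟨i, hiL⟩) (b := ⟨k + 1, hk⟩)
        (by simp [Fin.lt_def]; omega)
      simpa [hgi] using this
    · rintro ⟨hgf, hge⟩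
      have hgL : g ∈ L := List.mem_toFinset.mp (htf ▸ mem_facets_iff'.mpr hgf)
      obtain ⟨j, hj, hgj⟩ := List.getElem_of_mem hgL
      have hjk : j < k + 1 := by
        by_contra hjk
        push_neg at hjk
        rcases eq_or_lt_of_le hjk with hj' | hj'
        · apply faceLexLt_irrefl' g
          have hge' : faceLexLt g L[k + 1] := hge
          subst hj'
          rwa [hgj] at hge' 
        · refine faceLexLt_asymm' hge ?_
          have := hsort.rel_get_of_lt (a := ⟨k + 1, hk⟩) (b := ⟨j, hj⟩)
            (by simp [Fin.lt_def]; omega)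
          simpa [hgj] using this
      rw [← hgj]
      exact List.mem_take_iff_getElem.mpr ⟨j, by omega, rfl⟩
  obtain ⟨g, hg, hge, hneg⟩ := exists_earlier_neighbor' hP hconn hInt hefac hffac hfe
  obtain ⟨v, hv⟩ := hneg
  rw [Finset.mem_inter] at hv
  have hfirst : ∃ τ ⊆ e, τ.card = 1 ∧ ∃ G ∈ L.take (k + 1), τ ⊆ G := by
    refine ⟨{v}, Finset.singleton_subset_iff.mpr hv.2, Finset.card_singleton v,
      g, (htake g).mpr ⟨hg, hge⟩, Finset.singleton_subset_iff.mpr hv.1⟩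
  refine ⟨hfirst, ?_⟩
  rintro σ hσe ⟨G, hG, hσG⟩
  have hGfac : IsFacet Δ G := ((htake G).mp hG).1
  have hGe : faceLexLt G e := ((htake G).mp hG).2
  have hσcard : σ.card ≤ 2 := by
    have := Finset.card_le_card hσe
    rw [hP e hefac] at this
    exact this
  interval_cases hcard : σ.card
  · -- card 0
    obtain ⟨τ, hτe, hτc, hGs⟩ := hfirst
    have : σ = ∅ := Finset.card_eq_zero.mp hcard
    exact ⟨τ, this ▸ Finset.empty_subset τ, hτe, hτc, hGs⟩
  · exact ⟨σ, Finset.Subset.refl σ, hσe, hcard, G, hG, hσG⟩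
  · -- card 2: σ = e and e ⊆ G, contradiction
    exfalso
    have hσe' : σ = e := Finset.eq_of_subset_of_card_le hσe (by rw [hP e hefac, hcard])
    have heG : e = G := Finset.eq_of_subset_of_card_le (hσe' ▸ hσG)
      (by rw [hP e hefac, hP G hGfac])
    exact faceLexLt_irrefl' e (heG ▸ hGe)
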